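/- For n ≥ 1, p(n) = ∑_{m≥1} (-1)^{m+1} ( p(n - m(3m-1)/2) + p(n - m(3m+1)/2) ), where p of a negative integer is interpreted as 0. -/

import Mathlib

/-- The partition function extended by `0` to negative integers. -/
noncomputable def pInt (k : ℤ) : ℤ := if 0 ≤ k then (Nat.card (Nat.Partition k.toNat) : ℤ) else 0

open Finset

namespace Pent

/-- generalized pentagonal numbers -/
def g (j : ℤ) : ℤ := j * (3 * j - 1) / 2

lemma g_dvd (j : ℤ) : (2:ℤ) ∣ j * (3 * j - 1) := by
  rcases Int.even_or_odd j with ⟨c, hc⟩ | ⟨c, hc⟩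
  · exact ⟨c * (3 * j - 1), by rw [hc]; ring⟩
  · exact ⟨j * (3 * c + 1), by rw [hc]; ring⟩

lemma two_g (j : ℤ) : 2 * g j = j * (3 * j - 1) := Int.mul_ediv_cancel' (g_dvd j)

lemma g_sub (j : ℤ) : g j - g (j - 1) = 3 * j - 2 := by
  have h1 := two_g j; have h2 := two_g (j - 1); nlinarith

lemma g_add (j : ℤ) : g (j + 1) - g j = 3 * j + 1 := by
  have := g_sub (j + 1); simp at this; linarith

lemma abs_le_g (j : ℤ) : |j| ≤ g j := by
  have h := two_g j
  have k1 : 0 ≤ 3 * j * (j - 1) := by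
    rcases le_or_gt 1 j with h' | h'
    · exact mul_nonneg (by linarith) (by linarith)
    · have : j ≤ 0 := by omega
      have : 3 * j ≤ 0 := by linarith
      nlinarith
  have k2 : 0 ≤ j * (3 * j + 1) := by
    rcases le_or_gt 0 j with h' | h'
    · exact mul_nonneg h' (by linarith)
    · have : j ≤ -1 := by omega
      nlinarith
  rcases abs_cases j with ⟨h1, h2⟩ | ⟨h1, h2⟩ <;> rw [h1] <;> nlinarith

/-- partitions of k as a Finset of multisets -/
def parts (k : ℕ) : Finset (Multiset ℕ) := Finset.univ.image (Nat.Partition.parts (n := k))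

lemma mem_parts {k : ℕ} {M : Multiset ℕ} :
    M ∈ parts k ↔ M.sum = k ∧ ∀ i ∈ M, 0 < i := by
  constructor
  · rintro h
    simp only [parts, mem_image, mem_univ, true_and] at h
    obtain ⟨p, rfl⟩ := h
    exact ⟨p.parts_sum, fun i hi => p.parts_pos hi⟩
  · rintro ⟨h1, h2⟩
    simp only [parts, mem_image, mem_univ, true_and]
    exact ⟨⟨M, fun hi => h2 _ hi, h1⟩, rfl⟩

lemma card_parts (k : ℕ) : ((parts k).card : ℤ) = pInt k := by
  have : (parts k).card = Nat.card (Nat.Partition k) := by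
    rw [Nat.card_eq_fintype_card, ← Finset.card_univ]
    apply Finset.card_image_of_injective
    intro a b h
    exact Nat.Partition.ext h
  rw [this, pInt]
  simp

/-- cells of the big signed set -/
noncomputable def cell (n : ℕ) (j : ℤ) : Finset (Multiset ℕ) :=
  if 0 ≤ (n:ℤ) - g j then parts ((n:ℤ) - g j).toNat else ∅

lemma mem_cell {n : ℕ} {j : ℤ} {M : Multiset ℕ} :
    M ∈ cell n j ↔ (M.sum : ℤ) = (n:ℤ) - g j ∧ ∀ i ∈ M, 0 < i := by
  unfold cell
  split_ifs with h
  · rw [mem_parts]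
    constructor
    · rintro ⟨h1, h2⟩
      refine ⟨?_, h2⟩
      rw [h1, Int.toNat_of_nonneg h]
    · rintro ⟨h1, h2⟩
      refine ⟨?_, h2⟩
      omega
  · simp only [Finset.notMem_empty, false_iff, not_and]
    intro h1 _
    omega

lemma card_cell (n : ℕ) (j : ℤ) : ((cell n j).card : ℤ) = pInt ((n:ℤ) - g j) := by
  unfold cell
  split_ifs with h
  · rw [card_parts, Int.toNat_of_nonneg h]
  · rw [pInt, if_neg h]; simp

/-- the sign -/
def ε (j : ℤ) : ℤ := if Even j then 1 else -1

lemma ε_add_succ (j : ℤ) : ε j + ε (j + 1) = 0 := by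
  unfold ε
  by_cases h : Even j <;> simp [h, Int.even_add_one, ← Int.not_even_iff_odd]

lemma ε_add_pred (j : ℤ) : ε j + ε (j - 1) = 0 := by
  have := ε_add_succ (j - 1); simp at this; linarith

noncomputable def Ω (n : ℕ) : Finset (ℤ × Multiset ℕ) :=
  (Finset.Icc (-(n:ℤ)) n).biUnion (fun j => (cell n j).image (fun M => (j, M)))

lemma mem_Ω {n : ℕ} {j : ℤ} {M : Multiset ℕ} :
    (j, M) ∈ Ω n ↔ (M.sum : ℤ) = (n:ℤ) - g j ∧ ∀ i ∈ M, 0 < i := by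
  unfold Ω
  simp only [Finset.mem_biUnion, Finset.mem_image, Finset.mem_Icc, Prod.mk.injEq]
  constructor
  · rintro ⟨j', hj', M', hM', rfl, rfl⟩
    exact mem_cell.mp hM'
  · intro h
    refine ⟨j, ?_, M, mem_cell.mpr h, rfl, rfl⟩
    have h1 := abs_le_g j
    have h2 : g j ≤ n := by
      have := h.1
      have : (0:ℤ) ≤ M.sum := by positivity
      omega
    constructor <;> [skip; skip] <;> rcases abs_cases j with ⟨e1, e2⟩ | ⟨e1, e2⟩ <;> omega



lemma sum_map_pred (M : Multiset ℕ) (h : ∀ i ∈ M, 0 < i) :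
    (M.map (· - 1)).sum + Multiset.card M = M.sum := by
  induction M using Multiset.induction_on with
  | empty => simp
  | cons a s ih =>
    have ha : 0 < a := h a (Multiset.mem_cons_self a s)
    have := ih (fun i hi => h i (Multiset.mem_cons_of_mem hi))
    simp only [Multiset.map_cons, Multiset.sum_cons, Multiset.card_cons] at *
    omega

lemma msum_filter_ne_zero (M : Multiset ℕ) : (M.filter (· ≠ 0)).sum = M.sum := by
  induction M using Multiset.induction_on with
  | empty => simp
  | cons a s ih =>
    rw [Multiset.filter_cons]
    by_cases ha : a ≠ 0 <;> simp [ha, ih]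
    omega

lemma sum_map_succ (M : Multiset ℕ) : (M.map (· + 1)).sum = M.sum + Multiset.card M := by
  induction M using Multiset.induction_on with
  | empty => simp
  | cons a s ih => simp [ih]; ring

lemma sup_mem (M : Multiset ℕ) (h : M ≠ 0) : M.sup ∈ M := by
  induction M using Multiset.induction_on with
  | empty => simp at h
  | cons a s ih =>
    rw [Multiset.sup_cons]
    rcases eq_or_ne s 0 with rfl | hs
    · simp
    · rcases le_total a s.sup with h' | h'
      · rw [sup_eq_right.mpr h']
        exact Multiset.mem_cons_of_mem (ih hs)
      · rw [sup_eq_left.mpr h']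
        exact Multiset.mem_cons_self a s

lemma recover (M : Multiset ℕ) (h : ∀ i ∈ M, 0 < i) :
    ((M.map (· - 1)).filter (· ≠ 0)).map (· + 1) = M.filter (· ≠ 1) := by
  induction M using Multiset.induction_on with
  | empty => simp
  | cons a s ih =>
    have ha : 0 < a := h a (Multiset.mem_cons_self a s)
    have ih' := ih (fun i hi => h i (Multiset.mem_cons_of_mem hi))
    rw [Multiset.map_cons, Multiset.filter_cons, Multiset.filter_cons, Multiset.map_add, ih']
    rcases eq_or_ne a 1 with rfl | ha1
    · simp
    · have h2 : a - 1 ≠ 0 := by omega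
      rw [if_pos h2, if_pos ha1, Multiset.map_singleton]
      have h3 : a - 1 + 1 = a := by omega
      rw [h3]

lemma split_ones (M : Multiset ℕ) :
    M = M.filter (· ≠ 1) +
      Multiset.replicate (Multiset.card M - Multiset.card (M.filter (· ≠ 1))) 1 := by
  conv_lhs => rw [← Multiset.filter_add_not (· ≠ 1) M]
  congr 1
  rw [Multiset.eq_replicate]
  constructor
  · have := congrArg Multiset.card (Multiset.filter_add_not (· ≠ 1) M)
    simp only [Multiset.card_add] at this
    omega
  · intro b hb
    have := Multiset.of_mem_filter hb
    simpa using this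



/-- The Bressoud–Zeilberger involution. -/
noncomputable def φ (p : ℤ × Multiset ℕ) : ℤ × Multiset ℕ :=
  if (p.2.sup : ℤ) < Multiset.card p.2 + 3 * p.1 then
    (p.1 - 1, (((Multiset.card p.2 : ℤ) + 3 * p.1 - 2).toNat ::ₘ p.2.map (· - 1)).filter (· ≠ 0))
  else
    (p.1 + 1, (p.2.erase p.2.sup).map (· + 1) +
      Multiset.replicate (((p.2.sup : ℤ) - 3 * p.1 - 1 -
        Multiset.card (p.2.erase p.2.sup)).toNat) 1)

section Steps

variable {n : ℕ} {j : ℤ} {M : Multiset ℕ}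

/-- Branch A analysis. -/
lemma A_step (hs : (M.sum : ℤ) = (n:ℤ) - g j) (hpos : ∀ i ∈ M, 0 < i)
    (hc : (M.sup : ℤ) < Multiset.card M + 3 * j) :
    φ (j, M) = (j - 1, (((Multiset.card M : ℤ) + 3 * j - 2).toNat ::ₘ M.map (· - 1)).filter (· ≠ 0)) ∧
    ((((Multiset.card M : ℤ) + 3 * j - 2).toNat ::ₘ M.map (· - 1)).filter (· ≠ 0) ∈ cell n (j - 1)) ∧
    φ (φ (j, M)) = (j, M) := by
  set t := (Multiset.card M : ℤ) with ht
  set c := t + 3 * j - 2 with hcdef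
  -- c is nonnegative
  have hc0 : 0 ≤ c := by
    rcases eq_or_ne M 0 with rfl | hM
    · simp only [Multiset.sup_zero, Multiset.card_zero] at hc ht ⊢
      omega
    · obtain ⟨x, hx⟩ := Multiset.exists_mem_of_ne_zero hM
      have hx1 : 0 < x := hpos x hx
      have hx2 : x ≤ M.sup := Multiset.le_sup hx
      have : (1:ℤ) ≤ (M.sup : ℤ) := by exact_mod_cast hx2.trans' hx1
      omega
  set F := (M.map (· - 1)).filter (· ≠ 0) with hF
  set μ := (c.toNat ::ₘ M.map (· - 1)).filter (· ≠ 0) with hμ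
  have hphi : φ (j, M) = (j - 1, μ) := by
    rw [φ, if_pos hc]
  -- basic structure of μ
  have hμ2 : μ = (if c.toNat ≠ 0 then {c.toNat} else 0) + F := by
    rw [hμ, Multiset.filter_cons]
  -- elements of F are ≤ c.toNat
  have hFle : ∀ x ∈ F, x ≤ c.toNat := by
    intro x hxF
    have hx := Multiset.of_mem_filter hxF
    have hx2 := Multiset.mem_filter.mp hxF |>.1
    obtain ⟨y, hy, rfl⟩ := Multiset.mem_map.mp hx2
    have h1 : y ≤ M.sup := Multiset.le_sup hy
    have h2 : (y:ℤ) ≤ (M.sup:ℤ) := by exact_mod_cast h1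
    omega
  -- c.toNat = 0 forces F = 0
  have hF0 : c.toNat = 0 → F = 0 := by
    intro h0
    rw [Multiset.eq_zero_iff_forall_notMem]
    intro x hxF
    have := hFle x hxF
    have := Multiset.of_mem_filter hxF
    omega
  have hsup : μ.sup = c.toNat := by
    apply le_antisymm
    · rw [Multiset.sup_le]
      intro b hb
      rw [hμ2] at hb
      rcases Multiset.mem_add.mp hb with hb | hb
      · split_ifs at hb with h0
        · have : b = c.toNat := by simpa using hb
          omega
        · simp at hb
      · exact hFle b hb
    · rcases eq_or_ne c.toNat 0 with h0 | h0
      · omega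
      · apply Multiset.le_sup
        rw [hμ2, if_pos h0]
        simp
  have herase : μ.erase μ.sup = F := by
    rw [hsup, hμ2]
    split_ifs with h0
    · rw [Multiset.singleton_add, Multiset.erase_cons_head]
    · push_neg at h0
      rw [h0, hF0 h0]
      simp
  have hcardF : Multiset.card F ≤ Multiset.card M := by
    calc Multiset.card F ≤ Multiset.card (M.map (· - 1)) := Multiset.card_le_card (Multiset.filter_le _ _)
    _ = Multiset.card M := Multiset.card_map _ _
  have hcardμ : (Multiset.card μ : ℤ) = (if c.toNat ≠ 0 then 1 else 0) + Multiset.card F := by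
    rw [hμ2]
    split_ifs <;> simp <;> push_cast <;> ring
  -- sum of μ
  have hsumF : (F.sum : ℤ) = M.sum - t := by
    rw [hF, msum_filter_ne_zero]
    have := sum_map_pred M hpos
    push_cast [← this]
    ring
  have hsumμ : (μ.sum : ℤ) = (n:ℤ) - g (j - 1) := by
    have h1 : μ.sum = c.toNat + F.sum := by
      rw [hμ2]
      split_ifs with h0
      · simp
      · push_neg at h0
        simp [h0]
    have h2 : ((c.toNat : ℤ)) = c := Int.toNat_of_nonneg hc0
    have h3 := g_sub j
    have h4 : (μ.sum : ℤ) = ((c.toNat : ℤ)) + (F.sum : ℤ) := by rw [h1, Nat.cast_add]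
    rw [h4, h2, hsumF]
    omega
  have hmem : μ ∈ cell n (j - 1) := by
    rw [mem_cell]
    refine ⟨hsumμ, ?_⟩
    intro i hi
    have := Multiset.mem_filter.mp hi |>.2
    simp at this
    omega
  refine ⟨hphi, hmem, ?_⟩
  -- second application is branch B
  rw [hphi, φ]
  have hBcond : ¬ ((μ.sup : ℤ) < Multiset.card μ + 3 * (j - 1)) := by
    rw [hsup]
    have h2 : ((c.toNat : ℤ)) = c := Int.toNat_of_nonneg hc0
    rw [h2, hcardμ]
    split_ifs <;> omega
  rw [if_neg hBcond]
  simp only [Prod.mk.injEq]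
  constructor
  · ring
  · -- recover M
    rw [herase, hsup]
    have h2 : ((c.toNat : ℤ)) = c := Int.toNat_of_nonneg hc0
    have hpad : ((c.toNat : ℤ) - 3 * (j - 1) - 1 - Multiset.card F).toNat
        = Multiset.card M - Multiset.card F := by
      rw [h2]
      have hFM : (Multiset.card F : ℤ) ≤ t := by rw [ht]; exact_mod_cast hcardF
      omega
    rw [hpad, recover M hpos]
    have hcards : Multiset.card F = Multiset.card (M.filter (· ≠ 1)) := by
      rw [← recover M hpos, Multiset.card_map]
    rw [hcards]
    exact (split_ones M).symm

/-- Branch B analysis. -/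
lemma B_step (hn : 1 ≤ n) (hs : (M.sum : ℤ) = (n:ℤ) - g j) (hpos : ∀ i ∈ M, 0 < i)
    (hc : ¬ ((M.sup : ℤ) < Multiset.card M + 3 * j)) :
    (φ (j, M)).1 = j + 1 ∧ (φ (j, M)).2 ∈ cell n (j + 1) ∧ φ (φ (j, M)) = (j, M) := by
  have hphi : φ (j, M) = (j + 1, (M.erase M.sup).map (· + 1) +
      Multiset.replicate (((M.sup : ℤ) - 3 * j - 1 -
        Multiset.card (M.erase M.sup)).toNat) 1) := by
    rw [φ, if_neg hc]
  rcases eq_or_ne M 0 with rfl | hM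
  · -- empty partition case
    have ha : (0 : Multiset ℕ).sup = 0 := rfl
    have hj0 : j ≠ 0 := by
      intro h
      rw [h] at hs
      have : g 0 = 0 := by decide
      rw [this] at hs
      simp at hs
      omega
    have hj : j ≤ -1 := by
      rw [ha] at hc
      simp at hc
      omega
    have hpad : ((0:ℤ) - 3 * j - 1 - (0:ℕ)).toNat = (-3 * j - 1).toNat := by norm_num
    have hpadpos : (2:ℤ) ≤ -3 * j - 1 := by omega
    set pad := ((-3) * j - 1).toNat with hpaddef
    have hpadc : (pad : ℤ) = -3 * j - 1 := Int.toNat_of_nonneg (by omega)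
    have hν : φ ((j : ℤ), (0 : Multiset ℕ)) = (j + 1, Multiset.replicate pad 1) := by
      rw [hphi]
      rw [Multiset.erase_zero, Multiset.map_zero, zero_add, ha, Multiset.card_zero]
      congr 3
      push_cast
      ring
    rw [hν]
    have hg := g_add j
    have hs0 : (0:ℤ) = (n:ℤ) - g j := by simpa using hs
    refine ⟨rfl, ?_, ?_⟩
    · rw [mem_cell]
      constructor
      · rw [Multiset.sum_replicate]
        simp only [smul_eq_mul, mul_one]
        rw [hpadc]
        omega
      · intro i hi
        have := Multiset.eq_of_mem_replicate hi
        omega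
    · -- apply φ again
      have hsup1 : (Multiset.replicate pad 1).sup = 1 := by
        apply le_antisymm
        · rw [Multiset.sup_le]
          intro b hb
          exact le_of_eq (Multiset.eq_of_mem_replicate hb)
        · apply Multiset.le_sup
          apply Multiset.mem_replicate.mpr
          constructor
          · omega
          · rfl
      have hcard1 : Multiset.card (Multiset.replicate pad 1) = pad := Multiset.card_replicate _ _
      rw [φ]
      simp only [hsup1, hcard1]
      rw [if_pos (by push_cast; omega)]
      simp only [Prod.mk.injEq]
      refine ⟨by ring, ?_⟩
      have h1 : ((pad:ℤ) + 3 * (j + 1) - 2).toNat = 0 := by omega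
      rw [h1, Multiset.map_replicate]
      rw [Multiset.filter_cons, if_neg (by simp), zero_add]
      rw [Multiset.filter_eq_nil]
      intro b hb
      have := Multiset.eq_of_mem_replicate hb
      simp [this]
  · -- nonempty partition case
    set a := M.sup with hadef
    set E := M.erase a with hEdef
    have haM : a ∈ M := sup_mem M hM
    have ha1 : 0 < a := hpos a haM
    have hcons : a ::ₘ E = M := Multiset.cons_erase haM
    have hcardE : Multiset.card E + 1 = Multiset.card M := by
      rw [← hcons, Multiset.card_cons]
    have hsE : (E.sum : ℤ) = (M.sum : ℤ) - a := by
      have : M.sum = a + E.sum := by rw [← hcons, Multiset.sum_cons]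
      push_cast [this]
      ring
    have hposE : ∀ i ∈ E, 0 < i := fun i hi => hpos i (Multiset.mem_of_mem_erase hi)
    set pad := ((a : ℤ) - 3 * j - 1 - Multiset.card E).toNat with hpaddef
    have hpadnn : (0:ℤ) ≤ (a : ℤ) - 3 * j - 1 - Multiset.card E := by
      push_neg at hc
      omega
    have hpadc : (pad : ℤ) = (a : ℤ) - 3 * j - 1 - Multiset.card E :=
      Int.toNat_of_nonneg hpadnn
    set ν := E.map (· + 1) + Multiset.replicate pad 1 with hνdef
    have hν : φ ((j : ℤ), M) = (j + 1, ν) := hphi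
    rw [hν]
    have hg := g_add j
    have hsumν : (ν.sum : ℤ) = (n:ℤ) - g (j + 1) := by
      have h1 : ν.sum = (E.sum + Multiset.card E) + pad := by
        rw [hνdef, Multiset.sum_add, sum_map_succ, Multiset.sum_replicate, smul_eq_mul, mul_one]
      rw [h1, Nat.cast_add, Nat.cast_add]
      omega
    have hcardν : (Multiset.card ν : ℤ) = (a : ℤ) - 3 * j - 1 := by
      rw [hνdef, Multiset.card_add, Multiset.card_map, Multiset.card_replicate]
      push_cast
      omega
    refine ⟨rfl, ?_, ?_⟩
    · rw [mem_cell]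
      refine ⟨hsumν, ?_⟩
      intro i hi
      rcases Multiset.mem_add.mp hi with hi | hi
      · obtain ⟨y, _, rfl⟩ := Multiset.mem_map.mp hi
        omega
      · have := Multiset.eq_of_mem_replicate hi
        omega
    · -- apply φ again: branch A applies
      have hsupν : (ν.sup : ℤ) ≤ (a : ℤ) + 1 := by
        have : ν.sup ≤ a + 1 := by
          rw [Multiset.sup_le]
          intro b hb
          rcases Multiset.mem_add.mp hb with hb | hb
          · obtain ⟨y, hy, rfl⟩ := Multiset.mem_map.mp hb
            have : y ≤ a := Multiset.le_sup (Multiset.mem_of_mem_erase hy)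
            omega
          · have := Multiset.eq_of_mem_replicate hb
            omega
        exact_mod_cast this
      rw [φ]
      dsimp only
      rw [if_pos (by rw [hcardν]; omega)]
      simp only [Prod.mk.injEq]
      refine ⟨by ring, ?_⟩
      have hc2 : ((Multiset.card ν : ℤ) + 3 * (j + 1) - 2).toNat = a := by
        rw [hcardν]; omega
      rw [hc2]
      have hmap : ν.map (· - 1) = E + Multiset.replicate pad 0 := by
        rw [hνdef, Multiset.map_add, Multiset.map_map, Multiset.map_replicate]
        congr 1
        · simp
      rw [hmap, Multiset.filter_cons]
      rw [if_pos (by omega)]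
      rw [Multiset.filter_add]
      have h1 : Multiset.filter (· ≠ 0) E = E := by
        rw [Multiset.filter_eq_self]
        intro b hb
        have := hposE b hb
        omega
      have h2 : Multiset.filter (· ≠ 0) (Multiset.replicate pad (0:ℕ)) = 0 := by
        rw [Multiset.filter_eq_nil]
        intro b hb
        have := Multiset.eq_of_mem_replicate hb
        omega
      rw [h1, h2, add_zero, Multiset.singleton_add, hcons]

end Steps


theorem sum_eps_zero (n : ℕ) (hn : 1 ≤ n) : ∑ p ∈ Ω n, ε p.1 = 0 := by
  apply Finset.sum_involution (fun p _ => φ p)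
  · rintro ⟨j, M⟩ hp
    obtain ⟨hs, hpos⟩ := mem_Ω.mp hp
    by_cases hc : (M.sup : ℤ) < Multiset.card M + 3 * j
    · obtain ⟨h1, _, _⟩ := A_step hs hpos hc
      rw [h1]
      exact ε_add_pred j
    · obtain ⟨h1, _, _⟩ := B_step hn hs hpos hc
      have : φ (j, M) = ((φ (j, M)).1, (φ (j, M)).2) := rfl
      rw [this, h1]
      exact ε_add_succ j
  · rintro ⟨j, M⟩ hp _
    obtain ⟨hs, hpos⟩ := mem_Ω.mp hp
    intro heq
    by_cases hc : (M.sup : ℤ) < Multiset.card M + 3 * j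
    · obtain ⟨h1, _, _⟩ := A_step hs hpos hc
      rw [h1] at heq
      have := congrArg Prod.fst heq
      simp at this
    · obtain ⟨h1, _, _⟩ := B_step hn hs hpos hc
      have := congrArg Prod.fst heq
      rw [h1] at this
      simp at this
  · rintro ⟨j, M⟩ hp
    obtain ⟨hs, hpos⟩ := mem_Ω.mp hp
    by_cases hc : (M.sup : ℤ) < Multiset.card M + 3 * j
    · obtain ⟨h1, h2, _⟩ := A_step hs hpos hc
      rw [h1]
      exact mem_Ω.mpr (mem_cell.mp h2)
    · obtain ⟨h1, h2, _⟩ := B_step hn hs hpos hc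
      have heq : φ (j, M) = ((φ (j, M)).1, (φ (j, M)).2) := rfl
      rw [heq, h1]
      exact mem_Ω.mpr (mem_cell.mp h2)
  · rintro ⟨j, M⟩ hp
    obtain ⟨hs, hpos⟩ := mem_Ω.mp hp
    by_cases hc : (M.sup : ℤ) < Multiset.card M + 3 * j
    · exact (A_step hs hpos hc).2.2
    · exact (B_step hn hs hpos hc).2.2

theorem sum_pInt_zero (n : ℕ) (hn : 1 ≤ n) :
    ∑ j ∈ Finset.Icc (-(n:ℤ)) n, ε j * pInt ((n:ℤ) - g j) = 0 := by
  have h1 : ∑ p ∈ Ω n, ε p.1 = ∑ j ∈ Finset.Icc (-(n:ℤ)) n, ε j * ((cell n j).card : ℤ) := by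
    rw [Ω, Finset.sum_biUnion]
    · apply Finset.sum_congr rfl
      intro j _
      rw [Finset.sum_image (by intro a _ b _ h; simpa using h)]
      simp [mul_comm]
    · intro a _ b _ hab
      apply Finset.disjoint_left.mpr
      intro p hp hq
      simp only [Finset.mem_image] at hp hq
      obtain ⟨_, _, rfl⟩ := hp
      obtain ⟨_, _, h⟩ := hq
      exact hab (by simpa using (congrArg Prod.fst h).symm)
  have h2 := sum_eps_zero n hn
  rw [h1] at h2
  rw [← h2]
  apply Finset.sum_congr rfl
  intro j _
  rw [card_cell]

lemma eps_nat (m : ℕ) : ε (m : ℤ) = (-1 : ℤ) ^ m := by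
  unfold ε
  rcases Nat.even_or_odd m with h | h
  · rw [if_pos (by exact_mod_cast (Int.even_coe_nat m).mpr h), h.neg_one_pow]
  · rw [if_neg (by rw [Int.even_coe_nat]; exact Nat.not_even_iff_odd.mpr h),
      h.neg_one_pow]

lemma eps_neg (j : ℤ) : ε (-j) = ε j := by
  unfold ε
  simp [even_neg]

lemma g_nat (m : ℕ) : g (m : ℤ) = (m : ℤ) * (3 * m - 1) / 2 := rfl

lemma g_neg_nat (m : ℕ) : g (-(m : ℤ)) = (m : ℤ) * (3 * m + 1) / 2 := by
  unfold g
  have : (-(m:ℤ)) * (3 * (-(m:ℤ)) - 1) = (m:ℤ) * (3 * m + 1) := by ring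
  rw [this]

end Pent

theorem pentagonal_recurrence (n : ℕ) (hn : 1 ≤ n) :
    pInt n = ∑ m ∈ Finset.Icc 1 n,
      (-1 : ℤ) ^ (m + 1) *
        (pInt ((n : ℤ) - m * (3 * m - 1) / 2) + pInt ((n : ℤ) - m * (3 * m + 1) / 2)) := by
  classical
  have key := Pent.sum_pInt_zero n hn
  set F : ℤ → ℤ := fun j => Pent.ε j * pInt ((n:ℤ) - Pent.g j) with hF
  -- split the interval
  have hsplit : Finset.Icc (-(n:ℤ)) n = insert 0 (Finset.Icc (-(n:ℤ)) (-1) ∪ Finset.Icc 1 n) := by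
    ext x
    simp only [Finset.mem_Icc, Finset.mem_insert, Finset.mem_union]
    omega
  rw [hsplit] at key
  rw [Finset.sum_insert (by simp only [Finset.mem_union, Finset.mem_Icc]; omega)] at key
  rw [Finset.sum_union (by
    apply Finset.disjoint_left.mpr
    intro x hx hy
    simp only [Finset.mem_Icc] at hx hy
    omega)] at key
  have hF0 : Pent.ε 0 * pInt ((n:ℤ) - Pent.g 0) = pInt (n:ℤ) := by
    have : Pent.g 0 = 0 := by simp [Pent.g]
    rw [this]
    simp [Pent.ε]
  -- reindex negative part
  have hneg : ∑ j ∈ Finset.Icc (-(n:ℤ)) (-1), F j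
      = ∑ m ∈ Finset.Icc 1 n, Pent.ε m * pInt ((n:ℤ) - (m:ℤ) * (3 * m + 1) / 2) := by
    refine Finset.sum_nbij' (fun j => (-j).toNat) (fun m => -(m:ℤ)) ?_ ?_ ?_ ?_ ?_
    · intro a ha
      simp only [Finset.mem_Icc] at ha ⊢
      omega
    · intro a ha
      simp only [Finset.mem_Icc] at ha ⊢
      omega
    · intro a ha
      simp only [Finset.mem_Icc] at ha
      omega
    · intro a ha
      simp only [Finset.mem_Icc] at ha
      omega
    · intro a ha
      simp only [Finset.mem_Icc] at ha
      simp only [hF]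
      set m := (-a).toNat with hmdef
      have hm : a = -(m:ℤ) := by omega
      rw [hm, Pent.eps_neg, Pent.g_neg_nat]
  -- reindex positive part
  have hpos : ∑ j ∈ Finset.Icc (1:ℤ) n, F j
      = ∑ m ∈ Finset.Icc 1 n, Pent.ε m * pInt ((n:ℤ) - (m:ℤ) * (3 * m - 1) / 2) := by
    refine Finset.sum_nbij' (fun j => j.toNat) (fun m => (m:ℤ)) ?_ ?_ ?_ ?_ ?_
    · intro a ha
      simp only [Finset.mem_Icc] at ha ⊢
      omega
    · intro a ha
      simp only [Finset.mem_Icc] at ha ⊢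
      omega
    · intro a ha
      simp only [Finset.mem_Icc] at ha
      omega
    · intro a ha
      simp only [Finset.mem_Icc] at ha
      omega
    · intro a ha
      simp only [Finset.mem_Icc] at ha
      have hcast : (a.toNat : ℤ) = a := by omega
      simp only [hF]
      rw [hcast]
      rfl
  rw [hneg, hpos, hF0] at key
  rw [← Finset.sum_add_distrib] at key
  have : ∀ m ∈ Finset.Icc 1 n,
      Pent.ε m * pInt ((n:ℤ) - (m:ℤ) * (3 * m + 1) / 2)
        + Pent.ε m * pInt ((n:ℤ) - (m:ℤ) * (3 * m - 1) / 2)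
      = - ((-1 : ℤ) ^ (m + 1) *
        (pInt ((n : ℤ) - m * (3 * m - 1) / 2) + pInt ((n : ℤ) - m * (3 * m + 1) / 2))) := by
    intro m _
    rw [Pent.eps_nat, pow_succ]
    ring
  rw [Finset.sum_congr rfl this, Finset.sum_neg_distrib] at key
  linarith
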